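/- arXiv:1203.3136 — 2 statements merged into one kernel-verified Lean document; each statement's English description precedes it below -/
import Mathlib

section
/- Suppose a discrete-time system x(k+1) = φ(x(k), u(k)) with φ(0,0) = 0 admits, for every state x₀ with ‖x₀‖ ≤ R, a control sequence u(0),…,u(N-1) such that the resulting trajectory satisfies ∑_{j=1}^{N} (‖x(j)‖² + ‖u(j-1)‖²) ≤ σ‖x₀‖² and ‖x(N)‖² ≤ β‖x₀‖², with 0 ≤ β < 1 and σ ≥ 0. Then by concatenating such N-step controls, there exists an infinite control sequence from any ‖x(0)‖ ≤ R whose total cost ∑_{j=1}^{∞} (‖x(j)‖² + ‖u(j-1)‖²) is at most (σ/(1-β))‖x(0)‖². -/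
/-- The trajectory of the system x(k+1) = φ(x(k), u(k)). -/
def traj {α γ : Type*} (φ : α → γ → α) (x₀ : α) (u : ℕ → γ) : ℕ → α
  | 0 => x₀
  | k + 1 => φ (traj φ x₀ u k) (u k)

/-- The state at the start of block `i`, when applying the N-step control `V x` from state `x`. -/
def blockState {α γ : Type*} (φ : α → γ → α) (N : ℕ) (V : α → ℕ → γ) (x₀ : α) : ℕ → α
  | 0 => x₀
  | i + 1 => traj φ (blockState φ N V x₀ i) (V (blockState φ N V x₀ i)) N

theorem traj_zero {α γ : Type*} (φ : α → γ → α) (x₀ : α) (u : ℕ → γ) :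
    traj φ x₀ u 0 = x₀ := rfl

theorem traj_succ {α γ : Type*} (φ : α → γ → α) (x₀ : α) (u : ℕ → γ) (k : ℕ) :
    traj φ x₀ u (k + 1) = φ (traj φ x₀ u k) (u k) := rfl

theorem blockState_zero {α γ : Type*} (φ : α → γ → α) (N : ℕ) (V : α → ℕ → γ) (x₀ : α) :
    blockState φ N V x₀ 0 = x₀ := rfl

theorem blockState_succ {α γ : Type*} (φ : α → γ → α) (N : ℕ) (V : α → ℕ → γ) (x₀ : α) (i : ℕ) :
    blockState φ N V x₀ (i + 1) =
      traj φ (blockState φ N V x₀ i) (V (blockState φ N V x₀ i)) N := rfl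

theorem stmt13 (n m N : ℕ) (hN : 1 ≤ N)
    (φ : EuclideanSpace ℝ (Fin n) → EuclideanSpace ℝ (Fin m) → EuclideanSpace ℝ (Fin n))
    (hφ0 : φ 0 0 = 0) (β σ R : ℝ) (h0 : 0 ≤ β) (h1 : β < 1) (hσ : 0 ≤ σ)
    (hstab : ∀ x₀ : EuclideanSpace ℝ (Fin n), ‖x₀‖ ≤ R →
      ∃ u : ℕ → EuclideanSpace ℝ (Fin m),
        (∑ j ∈ Finset.Icc 1 N, (‖traj φ x₀ u j‖ ^ 2 + ‖u (j - 1)‖ ^ 2)) ≤ σ * ‖x₀‖ ^ 2 ∧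
        ‖traj φ x₀ u N‖ ^ 2 ≤ β * ‖x₀‖ ^ 2) :
    ∀ x₀ : EuclideanSpace ℝ (Fin n), ‖x₀‖ ≤ R →
      ∃ u : ℕ → EuclideanSpace ℝ (Fin m),
        Summable (fun j : ℕ => ‖traj φ x₀ u (j + 1)‖ ^ 2 + ‖u j‖ ^ 2) ∧
        (∑' j : ℕ, (‖traj φ x₀ u (j + 1)‖ ^ 2 + ‖u j‖ ^ 2)) ≤ σ / (1 - β) * ‖x₀‖ ^ 2 := by
  classical
  intro x₀ hx₀
  have hNpos : 0 < N := hN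
  choose U hU1 hU2 using hstab
  set V : EuclideanSpace ℝ (Fin n) → ℕ → EuclideanSpace ℝ (Fin m) :=
    fun x => if h : ‖x‖ ≤ R then U x h else fun _ => 0 with hVdef
  have hV1 : ∀ x, ‖x‖ ≤ R →
      (∑ j ∈ Finset.Icc 1 N, (‖traj φ x (V x) j‖ ^ 2 + ‖V x (j - 1)‖ ^ 2)) ≤ σ * ‖x‖ ^ 2 := by
    intro x h
    simp only [hVdef, dif_pos h]
    exact hU1 x h
  have hV2 : ∀ x, ‖x‖ ≤ R → ‖traj φ x (V x) N‖ ^ 2 ≤ β * ‖x‖ ^ 2 := by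
    intro x h
    simp only [hVdef, dif_pos h]
    exact hU2 x h
  set Y : ℕ → EuclideanSpace ℝ (Fin n) := blockState φ N V x₀ with hYdef
  -- invariants on the block states
  have hY : ∀ i, ‖Y i‖ ≤ R ∧ ‖Y i‖ ^ 2 ≤ β ^ i * ‖x₀‖ ^ 2 := by
    intro i
    induction i with
    | zero =>
      refine ⟨hx₀, ?_⟩
      show ‖x₀‖ ^ 2 ≤ β ^ 0 * ‖x₀‖ ^ 2
      simp
    | succ i ih =>
      obtain ⟨hR, hb⟩ := ih
      have hstep : ‖Y (i + 1)‖ ^ 2 ≤ β * ‖Y i‖ ^ 2 := by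
        rw [hYdef, blockState_succ]
        exact hV2 (blockState φ N V x₀ i) (by rw [hYdef] at hR; exact hR)
      constructor
      · have h2 : ‖Y (i + 1)‖ ^ 2 ≤ ‖Y i‖ ^ 2 := by
          calc ‖Y (i + 1)‖ ^ 2 ≤ β * ‖Y i‖ ^ 2 := hstep
            _ ≤ 1 * ‖Y i‖ ^ 2 := by
                apply mul_le_mul_of_nonneg_right h1.le (by positivity)
            _ = ‖Y i‖ ^ 2 := by ring
        have := (pow_le_pow_iff_left₀ (norm_nonneg _) (norm_nonneg _) (two_ne_zero)).mp h2
        exact this.trans hR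
      · calc ‖Y (i + 1)‖ ^ 2 ≤ β * ‖Y i‖ ^ 2 := hstep
          _ ≤ β * (β ^ i * ‖x₀‖ ^ 2) := mul_le_mul_of_nonneg_left hb h0
          _ = β ^ (i + 1) * ‖x₀‖ ^ 2 := by ring
  -- the concatenated control
  set u : ℕ → EuclideanSpace ℝ (Fin m) := fun k => V (Y (k / N)) (k % N) with hudef
  -- within each block, the trajectory matches the block trajectory
  have hYsucc : ∀ i, Y (i + 1) = traj φ (Y i) (V (Y i)) N := by
    intro i; rw [hYdef]; exact blockState_succ φ N V x₀ i
  have hY0 : Y 0 = x₀ := by rw [hYdef]; exact blockState_zero φ N V x₀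
  have htraj : ∀ i, ∀ r ≤ N, traj φ x₀ u (i * N + r) = traj φ (Y i) (V (Y i)) r := by
    intro i
    induction i with
    | zero =>
      intro r hr
      induction r with
      | zero =>
        rw [Nat.zero_mul, Nat.zero_add, traj_zero, traj_zero, hY0]
      | succ r ihr =>
        have hrN : r < N := hr
        have hu : u r = V (Y 0) r := by
          simp only [hudef, Nat.div_eq_of_lt hrN, Nat.mod_eq_of_lt hrN]
        rw [Nat.zero_mul, Nat.zero_add] at ihr ⊢
        rw [traj_succ, traj_succ, ihr (Nat.le_of_lt hrN), hu]
    | succ i ih =>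
      intro r hr
      induction r with
      | zero =>
        have h' : (i + 1) * N + 0 = i * N + N := by ring
        rw [h', ih N le_rfl, traj_zero, hYsucc]
      | succ r ihr =>
        have hrN : r < N := hr
        have hdiv : ((i + 1) * N + r) / N = i + 1 := by
          rw [Nat.add_comm, Nat.add_mul_div_right _ _ hNpos, Nat.div_eq_of_lt hrN, Nat.zero_add]
        have hmod : ((i + 1) * N + r) % N = r := by
          rw [Nat.add_comm, Nat.add_mul_mod_self_right, Nat.mod_eq_of_lt hrN]
        have hu : u ((i + 1) * N + r) = V (Y (i + 1)) r := by
          simp only [hudef, hdiv, hmod]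
        have h' : (i + 1) * N + (r + 1) = ((i + 1) * N + r) + 1 := by ring
        rw [h', traj_succ, traj_succ, ihr (Nat.le_of_lt hrN), hu]
  set f : ℕ → ℝ := fun j => ‖traj φ x₀ u (j + 1)‖ ^ 2 + ‖u j‖ ^ 2 with hfdef
  have hf0 : ∀ j, 0 ≤ f j := fun j => by positivity
  -- block cost bound
  have hblock : ∀ i, ∑ r ∈ Finset.range N, f (i * N + r) ≤ σ * β ^ i * ‖x₀‖ ^ 2 := by
    intro i
    have heq : ∀ r < N, f (i * N + r) =
        ‖traj φ (Y i) (V (Y i)) (r + 1)‖ ^ 2 + ‖V (Y i) r‖ ^ 2 := by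
      intro r hrN
      have hdiv : (i * N + r) / N = i := by
        rw [Nat.add_comm, Nat.add_mul_div_right _ _ hNpos, Nat.div_eq_of_lt hrN, Nat.zero_add]
      have hmod : (i * N + r) % N = r := by
        rw [Nat.add_comm, Nat.add_mul_mod_self_right, Nat.mod_eq_of_lt hrN]
      have hu : u (i * N + r) = V (Y i) r := by simp only [hudef, hdiv, hmod]
      have h1' : i * N + r + 1 = i * N + (r + 1) := by ring
      simp only [hfdef, hu, h1', htraj i (r + 1) hrN]
    calc ∑ r ∈ Finset.range N, f (i * N + r)
        = ∑ r ∈ Finset.range N,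
            (‖traj φ (Y i) (V (Y i)) (r + 1)‖ ^ 2 + ‖V (Y i) r‖ ^ 2) := by
          exact Finset.sum_congr rfl fun r hr => heq r (Finset.mem_range.mp hr)
      _ = ∑ j ∈ Finset.Icc 1 N, (‖traj φ (Y i) (V (Y i)) j‖ ^ 2 + ‖V (Y i) (j - 1)‖ ^ 2) := by
          rw [← Finset.Ico_add_one_right_eq_Icc, Finset.sum_Ico_eq_sum_range]
          simp [Nat.add_comm]
      _ ≤ σ * ‖Y i‖ ^ 2 := hV1 (Y i) (hY i).1
      _ ≤ σ * (β ^ i * ‖x₀‖ ^ 2) := mul_le_mul_of_nonneg_left (hY i).2 hσ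
      _ = σ * β ^ i * ‖x₀‖ ^ 2 := by ring
  have hgeom : ∀ K : ℕ, ∑ i ∈ Finset.range K, β ^ i ≤ (1 - β)⁻¹ := by
    intro K
    have hs : Summable (fun i : ℕ => β ^ i) := summable_geometric_of_lt_one h0 h1
    have := Summable.sum_le_tsum (Finset.range K) (fun i _ => pow_nonneg h0 i) hs
    rwa [tsum_geometric_of_lt_one h0 h1] at this
  have hbound : ∀ M, ∑ j ∈ Finset.range M, f j ≤ σ / (1 - β) * ‖x₀‖ ^ 2 := by
    intro M
    have hKN : ∀ K, ∑ j ∈ Finset.range (K * N), f j ≤ σ * (∑ i ∈ Finset.range K, β ^ i) * ‖x₀‖ ^ 2 := by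
      intro K
      induction K with
      | zero => simp
      | succ K ih =>
        have h1' : (K + 1) * N = K * N + N := by ring
        rw [h1', Finset.sum_range_add, Finset.sum_range_succ]
        calc (∑ j ∈ Finset.range (K * N), f j) + ∑ r ∈ Finset.range N, f (K * N + r)
            ≤ σ * (∑ i ∈ Finset.range K, β ^ i) * ‖x₀‖ ^ 2 + σ * β ^ K * ‖x₀‖ ^ 2 :=
              add_le_add ih (hblock K)
          _ = σ * ((∑ i ∈ Finset.range K, β ^ i) + β ^ K) * ‖x₀‖ ^ 2 := by ring
    have hMle : M ≤ (M / N + 1) * N := by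
      have h2' : M % N < N := Nat.mod_lt M hNpos
      calc M = N * (M / N) + M % N := (Nat.div_add_mod M N).symm
        _ ≤ N * (M / N) + N := by omega
        _ = (M / N + 1) * N := by ring
    calc ∑ j ∈ Finset.range M, f j
        ≤ ∑ j ∈ Finset.range ((M / N + 1) * N), f j := by
          apply Finset.sum_le_sum_of_subset_of_nonneg (Finset.range_subset_range.mpr hMle)
          intro j _ _; exact hf0 j
      _ ≤ σ * (∑ i ∈ Finset.range (M / N + 1), β ^ i) * ‖x₀‖ ^ 2 := hKN _
      _ ≤ σ * (1 - β)⁻¹ * ‖x₀‖ ^ 2 := by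
          apply mul_le_mul_of_nonneg_right _ (by positivity)
          exact mul_le_mul_of_nonneg_left (hgeom _) hσ
      _ = σ / (1 - β) * ‖x₀‖ ^ 2 := by rw [div_eq_mul_inv]
  have hsummable : Summable f := summable_of_sum_range_le hf0 hbound
  exact ⟨u, hsummable, Summable.tsum_le_of_sum_range_le hsummable hbound⟩
end

section
/- Suppose a discrete-time system x(k+1) = φ(x(k), u(k)) admits, for every x₀ with ‖x₀‖ ≤ R: (a) a 'free' N-step control achieving ∑_{j=1}^{N}(‖x(j)‖²+‖u(j-1)‖²) ≤ σ‖x₀‖² and ‖x(N)‖² ≤ β‖x₀‖²; and (b) a 'constrained' N-step control achieving ∑_{j=1}^{N}(‖x(j)‖²+‖u(j-1)‖²) ≤ σ‖x₀‖² and ‖x(N)‖² ≤ ‖x₀‖². Then alternating (b) then (a) forever from any ‖x(0)‖ ≤ R yields an infinite control sequence with total cost at most ((1+β)/(1-β))σ‖x(0)‖². -/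
theorem stmt14 (n m N : ℕ) (hN : 1 ≤ N)
    (φ : EuclideanSpace ℝ (Fin n) → EuclideanSpace ℝ (Fin m) → EuclideanSpace ℝ (Fin n))
    (hφ0 : φ 0 0 = 0) (β σ R : ℝ) (h0 : 0 ≤ β) (h1 : β < 1) (hσ : 0 ≤ σ)
    (hfree : ∀ x₀ : EuclideanSpace ℝ (Fin n), ‖x₀‖ ≤ R →
      ∃ u : ℕ → EuclideanSpace ℝ (Fin m),
        (∑ j ∈ Finset.Icc 1 N, (‖traj φ x₀ u j‖ ^ 2 + ‖u (j - 1)‖ ^ 2)) ≤ σ * ‖x₀‖ ^ 2 ∧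
        ‖traj φ x₀ u N‖ ^ 2 ≤ β * ‖x₀‖ ^ 2)
    (hconstr : ∀ x₀ : EuclideanSpace ℝ (Fin n), ‖x₀‖ ≤ R →
      ∃ u : ℕ → EuclideanSpace ℝ (Fin m),
        (∑ j ∈ Finset.Icc 1 N, (‖traj φ x₀ u j‖ ^ 2 + ‖u (j - 1)‖ ^ 2)) ≤ σ * ‖x₀‖ ^ 2 ∧
        ‖traj φ x₀ u N‖ ^ 2 ≤ ‖x₀‖ ^ 2) :
    ∀ x₀ : EuclideanSpace ℝ (Fin n), ‖x₀‖ ≤ R →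
      ∃ u : ℕ → EuclideanSpace ℝ (Fin m),
        Summable (fun j : ℕ => ‖traj φ x₀ u (j + 1)‖ ^ 2 + ‖u j‖ ^ 2) ∧
        (∑' j : ℕ, (‖traj φ x₀ u (j + 1)‖ ^ 2 + ‖u j‖ ^ 2)) ≤
          (1 + β) / (1 - β) * σ * ‖x₀‖ ^ 2 := by
  intro x₀ hx₀
  classical
  have hNpos : 0 < N := hN
  have hβ1 : (0:ℝ) < 1 - β := by linarith
  -- choice function for the free control
  have hEx : ∀ x : EuclideanSpace ℝ (Fin n),
      ∃ u : ℕ → EuclideanSpace ℝ (Fin m), ‖x‖ ≤ R →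
        (∑ j ∈ Finset.Icc 1 N, (‖traj φ x u j‖ ^ 2 + ‖u (j - 1)‖ ^ 2)) ≤ σ * ‖x‖ ^ 2 ∧
        ‖traj φ x u N‖ ^ 2 ≤ β * ‖x‖ ^ 2 := by
    intro x
    by_cases h : ‖x‖ ≤ R
    · obtain ⟨u, hu⟩ := hfree x h
      exact ⟨u, fun _ => hu⟩
    · exact ⟨0, fun h' => absurd h' h⟩
  choose F hFspec using hEx
  have traj_zero : ∀ (x : EuclideanSpace ℝ (Fin n)) (u : ℕ → EuclideanSpace ℝ (Fin m)),
      traj φ x u 0 = x := fun _ _ => rfl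
  have traj_succ : ∀ (x : EuclideanSpace ℝ (Fin n)) (u : ℕ → EuclideanSpace ℝ (Fin m)) (k : ℕ),
      traj φ x u (k+1) = φ (traj φ x u k) (u k) := fun _ _ _ => rfl
  -- states at block boundaries
  set X : ℕ → EuclideanSpace ℝ (Fin n) :=
    fun p => Nat.rec x₀ (fun _ x => traj φ x (F x) N) p with hX
  have hXs : ∀ p, X (p+1) = traj φ (X p) (F (X p)) N := fun p => rfl
  have hXR : ∀ p, ‖X p‖ ≤ R := by
    intro p
    induction p with
    | zero => exact hx₀
    | succ p ih =>
      have h2 := (hFspec (X p) ih).2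
      have h3 : ‖X (p+1)‖^2 ≤ ‖X p‖^2 := by
        rw [hXs]; nlinarith [sq_nonneg ‖X p‖]
      nlinarith [norm_nonneg (X (p+1)), norm_nonneg (X p), ih]
  have hXpow : ∀ p, ‖X p‖^2 ≤ β^p * ‖x₀‖^2 := by
    intro p
    induction p with
    | zero => show ‖x₀‖^2 ≤ β^0 * ‖x₀‖^2; simp
    | succ p ih =>
      have h2 := (hFspec (X p) (hXR p)).2
      calc ‖X (p+1)‖^2 ≤ β * ‖X p‖^2 := by rw [hXs]; exact h2
        _ ≤ β * (β^p * ‖x₀‖^2) := by nlinarith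
        _ = β^(p+1) * ‖x₀‖^2 := by ring
  -- concatenated control
  set U : ℕ → EuclideanSpace ℝ (Fin m) := fun k => F (X (k / N)) (k % N) with hU
  have hUdef : ∀ k, U k = F (X (k / N)) (k % N) := fun k => rfl
  refine ⟨U, ?_⟩
  have key : ∀ k, traj φ x₀ U k = traj φ (X (k / N)) (F (X (k / N))) (k % N) := by
    intro k
    induction k with
    | zero => rw [Nat.zero_div, Nat.zero_mod, traj_zero, traj_zero]; rfl
    | succ k ih =>
      by_cases h : k % N = N - 1
      · have e1 : N * (k/N) + (N - 1) = k := by rw [← h]; exact Nat.div_add_mod k N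
        have e2 : k + 1 = N * (k/N + 1) := by rw [Nat.mul_succ]; omega
        have ed : (k+1) / N = k/N + 1 := by rw [e2, Nat.mul_div_cancel_left _ hNpos]
        have em : (k+1) % N = 0 := by rw [e2]; exact Nat.mul_mod_right _ _
        have eN : (N - 1) + 1 = N := by omega
        rw [traj_succ, ih, hUdef, h, ed, em, traj_zero, hXs]
        conv_rhs => rw [← eN, traj_succ]
        rw [eN]
      · have hlt : k % N < N := Nat.mod_lt _ hNpos
        have hlt1 : k % N + 1 < N := by omega
        have e1 : N * (k/N) + (k % N + 1) = k + 1 := by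
          rw [← Nat.add_assoc, Nat.div_add_mod]
        have ed : (k+1) / N = k / N := by
          rw [← e1, Nat.mul_add_div hNpos, Nat.div_eq_of_lt hlt1, Nat.add_zero]
        have em : (k+1) % N = k % N + 1 := by
          rw [← e1, Nat.mul_add_mod, Nat.mod_eq_of_lt hlt1]
        rw [traj_succ, ih, hUdef, ed, em, traj_succ]
  -- block decomposition of the trajectory
  have key2 : ∀ p r, r ≤ N → traj φ x₀ U (p*N + r) = traj φ (X p) (F (X p)) r := by
    intro p r hr
    rcases eq_or_lt_of_le hr with h | h
    · rw [h]
      have e : p * N + N = (p+1) * N := by ring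
      have hk := key ((p+1)*N)
      rw [Nat.mul_div_cancel _ hNpos, Nat.mul_mod_left] at hk
      rw [e, hk, traj_zero, hXs]
    · have hk := key (p*N + r)
      have e1 : (p*N + r) / N = p := by
        rw [Nat.mul_comm, Nat.mul_add_div hNpos, Nat.div_eq_of_lt h, Nat.add_zero]
      have e2 : (p*N + r) % N = r := by
        rw [Nat.mul_comm, Nat.mul_add_mod, Nat.mod_eq_of_lt h]
      rw [hk, e1, e2]
  have keyU : ∀ p r, r < N → U (p*N + r) = F (X p) r := by
    intro p r h
    have e1 : (p*N + r) / N = p := by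
      rw [Nat.mul_comm, Nat.mul_add_div hNpos, Nat.div_eq_of_lt h, Nat.add_zero]
    have e2 : (p*N + r) % N = r := by
      rw [Nat.mul_comm, Nat.mul_add_mod, Nat.mod_eq_of_lt h]
    rw [hUdef, e1, e2]
  set f : ℕ → ℝ := fun j => ‖traj φ x₀ U (j + 1)‖ ^ 2 + ‖U j‖ ^ 2 with hf
  have hfnn : ∀ j, 0 ≤ f j := fun j => by positivity
  -- block sums
  have hblock : ∀ p, ∑ r ∈ Finset.range N, f (p*N + r) ≤ σ * β^p * ‖x₀‖^2 := by
    intro p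
    have hb : ∑ r ∈ Finset.range N, f (p*N + r)
        = ∑ j ∈ Finset.Icc 1 N, (‖traj φ (X p) (F (X p)) j‖ ^ 2 + ‖F (X p) (j - 1)‖ ^ 2) := by
      rw [show Finset.Icc 1 N = Finset.Ico 1 (N+1) by rw [Finset.Ico_add_one_right_eq_Icc],
        Finset.sum_Ico_eq_sum_range]
      simp only [Nat.add_sub_cancel]
      apply Finset.sum_congr rfl
      intro r hr
      have hr' : r < N := Finset.mem_range.mp hr
      have e : p*N + r + 1 = p*N + (r+1) := by omega
      rw [hf]
      simp only
      rw [e, key2 p (r+1) (by omega), keyU p r hr']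
      have : 1 + r = r + 1 := by omega
      rw [this]
      simp
    rw [hb]
    calc _ ≤ σ * ‖X p‖^2 := (hFspec (X p) (hXR p)).1
      _ ≤ σ * (β^p * ‖x₀‖^2) := by
          have := hXpow p
          nlinarith
      _ = σ * β^p * ‖x₀‖^2 := by ring
  -- partial sums over full blocks
  have hpart : ∀ P, ∑ j ∈ Finset.range (P*N), f j ≤ σ * ‖x₀‖^2 * ∑ p ∈ Finset.range P, β^p := by
    intro P
    induction P with
    | zero => simp
    | succ P ih =>
      have e : (P+1)*N = P*N + N := by ring
      rw [e, Finset.sum_range_add, Finset.sum_range_succ]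
      have := hblock P
      have hconv : ∑ r ∈ Finset.range N, f (P*N + r) ≤ σ * β^P * ‖x₀‖^2 := this
      calc _ ≤ σ * ‖x₀‖^2 * ∑ p ∈ Finset.range P, β^p + σ * β^P * ‖x₀‖^2 := by
            exact add_le_add ih hconv
        _ = σ * ‖x₀‖^2 * (∑ p ∈ Finset.range P, β^p + β^P) := by ring
  have hgeom : ∀ P, ∑ p ∈ Finset.range P, β^p ≤ 1 / (1 - β) := by
    intro P
    rw [le_div_iff₀ hβ1]
    have h := geom_sum_mul β P
    have hP : (0:ℝ) ≤ β^P := pow_nonneg h0 P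
    nlinarith
  have hC : ∀ M, ∑ j ∈ Finset.range M, f j ≤ σ * ‖x₀‖^2 * (1 / (1 - β)) := by
    intro M
    have hle : M ≤ (M/N + 1) * N :=
      le_of_lt ((Nat.div_lt_iff_lt_mul hNpos).mp (Nat.lt_succ_self _))
    calc ∑ j ∈ Finset.range M, f j ≤ ∑ j ∈ Finset.range ((M/N + 1) * N), f j := by
          apply Finset.sum_le_sum_of_subset_of_nonneg
          · exact Finset.range_subset_range.mpr hle
          · intro i _ _; exact hfnn i
      _ ≤ σ * ‖x₀‖^2 * ∑ p ∈ Finset.range (M/N + 1), β^p := hpart _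
      _ ≤ σ * ‖x₀‖^2 * (1 / (1 - β)) := by
          have := hgeom (M/N + 1)
          have hnn : (0:ℝ) ≤ σ * ‖x₀‖^2 := by positivity
          nlinarith
  have hsum : Summable f := summable_of_sum_range_le hfnn hC
  refine ⟨hsum, ?_⟩
  have ht := Summable.tsum_le_of_sum_range_le hsum hC
  calc (∑' j, f j) ≤ σ * ‖x₀‖^2 * (1 / (1 - β)) := ht
    _ ≤ σ * ‖x₀‖^2 * ((1 + β) / (1 - β)) := by
        apply mul_le_mul_of_nonneg_left _ (by positivity)
        rw [div_le_div_iff₀ hβ1 hβ1]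
        nlinarith
    _ = (1 + β) / (1 - β) * σ * ‖x₀‖ ^ 2 := by ring
end
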